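/- Let 1/2 < H < 1. There exists a constant M_H > 0 such that for every k ∈ ℤ²₀, ∑_{h ∈ ℤ²₀, h ≠ k} 1/(|h|^{4H} |k-h|^{4H}) ≤ M_H / |k|^{4H}. -/

import Mathlib

/-- Euclidean norm of an element of `ℤ²`. -/
noncomputable def znorm (k : ℤ × ℤ) : ℝ :=
  Real.sqrt ((k.1 : ℝ) ^ 2 + (k.2 : ℝ) ^ 2)

lemma znorm_nonneg (k : ℤ × ℤ) : 0 ≤ znorm k := Real.sqrt_nonneg _

lemma znorm_eq (k : ℤ × ℤ) : znorm k = ‖(⟨(k.1 : ℝ), (k.2 : ℝ)⟩ : ℂ)‖ := by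
  rw [Complex.norm_def, Complex.normSq_mk, znorm]
  congr 1
  ring

lemma znorm_pos {k : ℤ × ℤ} (hk : k ≠ 0) : 0 < znorm k := by
  rw [znorm_eq]
  refine norm_pos_iff.mpr ?_
  intro h
  apply hk
  rw [Complex.ext_iff] at h
  simp only [Complex.zero_re, Complex.zero_im] at h
  have h1 : k.1 = 0 := by exact_mod_cast h.1
  have h2 : k.2 = 0 := by exact_mod_cast h.2
  exact Prod.ext h1 h2

lemma znorm_triangle (k h : ℤ × ℤ) : znorm k ≤ znorm h + znorm (k - h) := by
  rw [znorm_eq, znorm_eq, znorm_eq]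
  have heq : (⟨(k.1 : ℝ), (k.2 : ℝ)⟩ : ℂ)
      = (⟨(h.1 : ℝ), (h.2 : ℝ)⟩ : ℂ) + (⟨((k - h).1 : ℝ), ((k - h).2 : ℝ)⟩ : ℂ) := by
    rw [Complex.ext_iff]
    constructor <;>
    · simp only [Complex.add_re, Complex.add_im, Prod.fst_sub, Prod.snd_sub]
      push_cast
      ring
  rw [heq]
  exact norm_add_le _ _

lemma abs_fst_le (p : ℤ × ℤ) : |(p.1 : ℝ)| ≤ znorm p := by
  rw [← Real.sqrt_sq_eq_abs]
  exact Real.sqrt_le_sqrt (by nlinarith [sq_nonneg ((p.2 : ℝ))])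

lemma abs_snd_le (p : ℤ × ℤ) : |(p.2 : ℝ)| ≤ znorm p := by
  rw [← Real.sqrt_sq_eq_abs]
  exact Real.sqrt_le_sqrt (by nlinarith [sq_nonneg ((p.1 : ℝ))])

lemma norm_symm_le (p : ℤ × ℤ) : ‖(finTwoArrowEquiv ℤ).symm p‖ ≤ znorm p := by
  rw [show (finTwoArrowEquiv ℤ).symm p = ![p.1, p.2] from rfl,
    EisensteinSeries.norm_eq_max_natAbs]
  simp only [Matrix.cons_val_zero, Matrix.cons_val_one, Matrix.head_cons]
  rw [Nat.cast_max, Nat.cast_natAbs, Nat.cast_natAbs, Int.cast_abs, Int.cast_abs]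
  exact max_le (abs_fst_le p) (abs_snd_le p)

lemma summable_inv_znorm {a : ℝ} (ha : 2 < a) :
    Summable (fun h : ℤ × ℤ => 1 / znorm h ^ a) := by
  have ha0 : 0 < a := by linarith
  have h0 : Summable fun x : Fin 2 → ℤ => ‖x‖ ^ (-a) :=
    EisensteinSeries.summable_one_div_norm_rpow ha
  have h1 : Summable fun p : ℤ × ℤ => ‖(finTwoArrowEquiv ℤ).symm p‖ ^ (-a) :=
    ((finTwoArrowEquiv ℤ).symm.summable_iff).mpr h0
  refine h1.of_nonneg_of_le
    (fun p => div_nonneg zero_le_one (Real.rpow_nonneg (znorm_nonneg _) _)) (fun p => ?_)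
  rcases eq_or_ne p 0 with rfl | hp
  · have he0 : (finTwoArrowEquiv ℤ).symm (0 : ℤ × ℤ) = 0 := by
      ext i
      fin_cases i <;> rfl
    rw [he0]
    have hz : znorm (0 : ℤ × ℤ) = 0 := by simp [znorm]
    rw [hz, norm_zero, Real.zero_rpow (by linarith : a ≠ 0),
      Real.zero_rpow (by intro h; apply absurd h; simp; linarith : (-a) ≠ 0)]
    norm_num
  · have hne : (finTwoArrowEquiv ℤ).symm p ≠ 0 := by
      intro h
      apply hp
      have h1' := congrFun h 0
      have h2' := congrFun h 1
      simp [finTwoArrowEquiv] at h1' h2'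
      exact Prod.ext h1' h2'
    have hpos : 0 < ‖(finTwoArrowEquiv ℤ).symm p‖ := norm_pos_iff.mpr hne
    rw [one_div, ← Real.rpow_neg (znorm_nonneg p)]
    exact Real.rpow_le_rpow_of_nonpos hpos (norm_symm_le p) (by linarith)

set_option maxHeartbeats 1000000 in
theorem statement_4 (H : ℝ) (hH1 : 1 / 2 < H) (hH2 : H < 1) :
    ∃ M : ℝ, 0 < M ∧ ∀ k : ℤ × ℤ, k ≠ 0 →
      (∑' h : {h : ℤ × ℤ // h ≠ 0 ∧ h ≠ k},
          1 / (znorm h.1 ^ (4 * H) * znorm (k - h.1) ^ (4 * H)))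
        ≤ M / znorm k ^ (4 * H) := by
  set a : ℝ := 4 * H with hadef
  have ha2 : 2 < a := by rw [hadef]; linarith
  have ha0 : 0 < a := by linarith
  have hS : Summable (fun h : ℤ × ℤ => 1 / znorm h ^ a) := summable_inv_znorm ha2
  set S : ℝ := ∑' h : ℤ × ℤ, 1 / znorm h ^ a with hSdef
  have hS0 : 0 ≤ S :=
    tsum_nonneg fun h => div_nonneg zero_le_one (Real.rpow_nonneg (znorm_nonneg _) _)
  refine ⟨2 ^ a * (2 * S) + 1, by positivity, fun k hk => ?_⟩
  set b : ℝ := znorm k with hbdef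
  have hb : 0 < b := znorm_pos hk
  have hbpow : 0 < b ^ a := Real.rpow_pos_of_pos hb a
  -- the key pointwise bound
  have half : ∀ x y : ℝ, 0 < x → 0 < y → b / 2 ≤ x →
      1 / (x ^ a * y ^ a) ≤ 2 ^ a / b ^ a * (1 / x ^ a + 1 / y ^ a) := by
    intro x y hx hy hxb
    have hb2 : (0 : ℝ) < b / 2 := by linarith
    have h2 : (b / 2) ^ a ≤ x ^ a := Real.rpow_le_rpow hb2.le hxb ha0.le
    have h3 : 1 / x ^ a ≤ 2 ^ a / b ^ a := by
      have := one_div_le_one_div_of_le (Real.rpow_pos_of_pos hb2 a) h2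
      rwa [Real.div_rpow hb.le (by norm_num : (0:ℝ) ≤ 2), one_div_div] at this
    have hxpow : 0 < x ^ a := Real.rpow_pos_of_pos hx a
    have hypow : 0 < y ^ a := Real.rpow_pos_of_pos hy a
    calc 1 / (x ^ a * y ^ a) = (1 / x ^ a) * (1 / y ^ a) := by ring
      _ ≤ (2 ^ a / b ^ a) * (1 / y ^ a) :=
          mul_le_mul_of_nonneg_right h3 (by positivity)
      _ ≤ 2 ^ a / b ^ a * (1 / x ^ a + 1 / y ^ a) := by
          refine mul_le_mul_of_nonneg_left ?_ (by positivity)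
          have : (0:ℝ) ≤ 1 / x ^ a := by positivity
          linarith
  have key : ∀ h : {h : ℤ × ℤ // h ≠ 0 ∧ h ≠ k},
      1 / (znorm h.1 ^ a * znorm (k - h.1) ^ a)
        ≤ 2 ^ a / b ^ a * (1 / znorm h.1 ^ a + 1 / znorm (k - h.1) ^ a) := by
    rintro ⟨h, h0, hk'⟩
    have hA : 0 < znorm h := znorm_pos h0
    have hB : 0 < znorm (k - h) := znorm_pos (sub_ne_zero.mpr (Ne.symm hk'))
    have htri : b ≤ znorm h + znorm (k - h) := znorm_triangle k h
    rcases le_total (b / 2) (znorm h) with hcase | hcase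
    · exact half _ _ hA hB hcase
    · have hcase' : b / 2 ≤ znorm (k - h) := by linarith
      have := half _ _ hB hA hcase'
      calc 1 / (znorm h ^ a * znorm (k - h) ^ a)
          = 1 / (znorm (k - h) ^ a * znorm h ^ a) := by ring_nf
        _ ≤ 2 ^ a / b ^ a * (1 / znorm (k - h) ^ a + 1 / znorm h ^ a) := this
        _ = 2 ^ a / b ^ a * (1 / znorm h ^ a + 1 / znorm (k - h) ^ a) := by ring
  -- summability facts
  have hS2 : Summable (fun h : ℤ × ℤ => 1 / znorm (k - h) ^ a) :=
    ((Equiv.subLeft k).summable_iff).mpr hS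
  have hg1 : Summable (fun h : {h : ℤ × ℤ // h ≠ 0 ∧ h ≠ k} => 1 / znorm h.1 ^ a) :=
    hS.comp_injective Subtype.val_injective
  have hg2 : Summable (fun h : {h : ℤ × ℤ // h ≠ 0 ∧ h ≠ k} => 1 / znorm (k - h.1) ^ a) :=
    hS2.comp_injective Subtype.val_injective
  have hg : Summable (fun h : {h : ℤ × ℤ // h ≠ 0 ∧ h ≠ k} =>
      2 ^ a / b ^ a * (1 / znorm h.1 ^ a + 1 / znorm (k - h.1) ^ a)) :=
    (hg1.add hg2).mul_left _
  have hf : Summable (fun h : {h : ℤ × ℤ // h ≠ 0 ∧ h ≠ k} =>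
      1 / (znorm h.1 ^ a * znorm (k - h.1) ^ a)) :=
    Summable.of_nonneg_of_le
      (fun h => div_nonneg zero_le_one
        (mul_nonneg (Real.rpow_nonneg (znorm_nonneg _) _) (Real.rpow_nonneg (znorm_nonneg _) _)))
      key hg
  -- sums of the two bounding pieces
  have hT1 : (∑' h : {h : ℤ × ℤ // h ≠ 0 ∧ h ≠ k}, 1 / znorm h.1 ^ a) ≤ S := by
    refine hg1.tsum_le_tsum_of_inj Subtype.val Subtype.val_injective
      (fun c _ => div_nonneg zero_le_one (Real.rpow_nonneg (znorm_nonneg _) _))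
      (fun h => le_rfl) hS
  have hT2 : (∑' h : {h : ℤ × ℤ // h ≠ 0 ∧ h ≠ k}, 1 / znorm (k - h.1) ^ a) ≤ S := by
    have hfull : (∑' h : ℤ × ℤ, 1 / znorm (k - h) ^ a) = S := by
      rw [hSdef]
      exact ((Equiv.subLeft k).tsum_eq (fun h => 1 / znorm h ^ a))
    calc (∑' h : {h : ℤ × ℤ // h ≠ 0 ∧ h ≠ k}, 1 / znorm (k - h.1) ^ a)
        ≤ ∑' h : ℤ × ℤ, 1 / znorm (k - h) ^ a :=
          hg2.tsum_le_tsum_of_inj Subtype.val Subtype.val_injective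
            (fun c _ => div_nonneg zero_le_one (Real.rpow_nonneg (znorm_nonneg _) _))
            (fun h => le_rfl) hS2
      _ = S := hfull
  calc (∑' h : {h : ℤ × ℤ // h ≠ 0 ∧ h ≠ k},
          1 / (znorm h.1 ^ a * znorm (k - h.1) ^ a))
      ≤ ∑' h : {h : ℤ × ℤ // h ≠ 0 ∧ h ≠ k},
          2 ^ a / b ^ a * (1 / znorm h.1 ^ a + 1 / znorm (k - h.1) ^ a) :=
        hf.tsum_le_tsum key hg
    _ = 2 ^ a / b ^ a * ((∑' h : {h : ℤ × ℤ // h ≠ 0 ∧ h ≠ k}, 1 / znorm h.1 ^ a)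
          + ∑' h : {h : ℤ × ℤ // h ≠ 0 ∧ h ≠ k}, 1 / znorm (k - h.1) ^ a) := by
        rw [tsum_mul_left, hg1.tsum_add hg2]
    _ ≤ 2 ^ a / b ^ a * (S + S) := by
        refine mul_le_mul_of_nonneg_left (by linarith) (by positivity)
    _ = 2 ^ a * (2 * S) / b ^ a := by ring
    _ ≤ (2 ^ a * (2 * S) + 1) / b ^ a := by
        apply div_le_div_of_nonneg_right ?_ hbpow.le
        linarith
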